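/- If 0 ≤ α < √(2π), then the Bayesian Nash equilibrium system Pᵢ = Φ(cᵢ + α·(1/|Fᵢ|)·Σ_{j∈Fᵢ} Pⱼ), i = 1,…,n, has exactly one solution P* ∈ [0,1]ⁿ. -/

import Mathlib

open MeasureTheory Real Filter

noncomputable def stdGaussianPDF (x : ℝ) : ℝ :=
  (Real.sqrt (2 * Real.pi))⁻¹ * Real.exp (-x ^ 2 / 2)

noncomputable def stdGaussianCDF (x : ℝ) : ℝ := ∫ t in Set.Iic x, stdGaussianPDF t

lemma sqrt2pi_pos : 0 < Real.sqrt (2 * Real.pi) :=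
  Real.sqrt_pos.2 (by positivity)

lemma pdf_nonneg (x : ℝ) : 0 ≤ stdGaussianPDF x := by
  unfold stdGaussianPDF; positivity

lemma pdf_le (x : ℝ) : stdGaussianPDF x ≤ (Real.sqrt (2 * Real.pi))⁻¹ := by
  unfold stdGaussianPDF
  have h1 : Real.exp (-x ^ 2 / 2) ≤ 1 := by
    rw [Real.exp_le_one_iff]; nlinarith [sq_nonneg x]
  calc (Real.sqrt (2 * Real.pi))⁻¹ * Real.exp (-x ^ 2 / 2)
      ≤ (Real.sqrt (2 * Real.pi))⁻¹ * 1 := by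
        exact mul_le_mul_of_nonneg_left h1 (by positivity)
    _ = _ := mul_one _

lemma integrable_pdf : Integrable stdGaussianPDF := by
  have h := (integrable_exp_neg_mul_sq (by norm_num : (0:ℝ) < 1/2)).const_mul
    (Real.sqrt (2 * Real.pi))⁻¹
  refine h.congr ?_
  filter_upwards with x
  unfold stdGaussianPDF
  ring_nf

lemma integral_pdf : ∫ x, stdGaussianPDF x = 1 := by
  unfold stdGaussianPDF
  rw [MeasureTheory.integral_const_mul]
  have : ∫ x : ℝ, Real.exp (-x ^ 2 / 2) = ∫ x : ℝ, Real.exp (-(1/2) * x ^ 2) := by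
    congr 1; funext x; ring_nf
  rw [this, integral_gaussian]
  rw [show Real.pi / (1/2) = 2 * Real.pi by ring]
  exact inv_mul_cancel₀ (ne_of_gt sqrt2pi_pos)

lemma cdf_mem_Icc (x : ℝ) : stdGaussianCDF x ∈ Set.Icc (0:ℝ) 1 := by
  constructor
  · exact setIntegral_nonneg measurableSet_Iic fun t _ => pdf_nonneg t
  · rw [← integral_pdf]
    exact setIntegral_le_integral integrable_pdf (Filter.Eventually.of_forall pdf_nonneg)

lemma cdf_lipschitz (a b : ℝ) :
    |stdGaussianCDF b - stdGaussianCDF a| ≤ (Real.sqrt (2 * Real.pi))⁻¹ * |b - a| := by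
  wlog hab : a ≤ b generalizing a b
  · rw [abs_sub_comm, abs_sub_comm b a]; exact this b a (le_of_not_ge hab)
  have key : stdGaussianCDF b - stdGaussianCDF a = ∫ t in Set.Ioc a b, stdGaussianPDF t := by
    unfold stdGaussianCDF
    rw [intervalIntegral.integral_Iic_sub_Iic integrable_pdf.integrableOn integrable_pdf.integrableOn,
      intervalIntegral.integral_of_le hab]
  rw [key, abs_of_nonneg (setIntegral_nonneg measurableSet_Ioc fun t _ => pdf_nonneg t),
    abs_of_nonneg (show (0:ℝ) ≤ b - a by linarith)]
  calc ∫ t in Set.Ioc a b, stdGaussianPDF t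
      ≤ ∫ _ in Set.Ioc a b, (Real.sqrt (2 * Real.pi))⁻¹ :=
        setIntegral_mono_on integrable_pdf.integrableOn (integrableOn_const (by
          simp [Real.volume_Ioc])) measurableSet_Ioc
          fun t _ => pdf_le t
    _ = (Real.sqrt (2 * Real.pi))⁻¹ * (b - a) := by
        rw [setIntegral_const, measureReal_def, Real.volume_Ioc, ENNReal.toReal_ofReal (by linarith),
          smul_eq_mul, mul_comm]

theorem treatment_bne_unique (n : ℕ) (α : ℝ)
    (hα0 : 0 ≤ α) (hα : α < Real.sqrt (2 * Real.pi))
    (c : Fin n → ℝ) (F : Fin n → Finset (Fin n)) (hF : ∀ i, (F i).Nonempty) :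
    ∃! P : Fin n → ℝ, (∀ i, P i ∈ Set.Icc (0:ℝ) 1) ∧
      ∀ i, P i = stdGaussianCDF (c i + α * ((∑ j ∈ F i, P j) / (F i).card)) := by
  set M : ℝ := (Real.sqrt (2 * Real.pi))⁻¹ with hM
  have hM0 : 0 ≤ M := by positivity
  set T : (Fin n → ℝ) → (Fin n → ℝ) :=
    fun P i => stdGaussianCDF (c i + α * ((∑ j ∈ F i, P j) / (F i).card)) with hT
  set K : NNReal := ⟨α * M, mul_nonneg hα0 hM0⟩ with hK
  have hK1 : (K : ℝ) < 1 := by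
    simp only [hK, NNReal.coe_mk]
    calc α * M < Real.sqrt (2 * Real.pi) * M := by
          exact mul_lt_mul_of_pos_right hα (by positivity)
      _ = 1 := mul_inv_cancel₀ (ne_of_gt sqrt2pi_pos)
  have hlip : LipschitzWith K T := by
    apply LipschitzWith.of_dist_le_mul
    intro P Q
    show dist (T P) (T Q) ≤ α * M * dist P Q
    refine (dist_pi_le_iff (by positivity)).2 fun i => ?_
    have havg : |(∑ j ∈ F i, P j) / (F i).card - (∑ j ∈ F i, Q j) / (F i).card| ≤ dist P Q := by
      have hcard : (0:ℝ) < (F i).card := by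
        exact_mod_cast Finset.card_pos.2 (hF i)
      rw [div_sub_div_same, ← Finset.sum_sub_distrib, abs_div, abs_of_pos hcard,
        div_le_iff₀ hcard]
      calc |∑ j ∈ F i, (P j - Q j)| ≤ ∑ j ∈ F i, |P j - Q j| := Finset.abs_sum_le_sum_abs _ _
        _ ≤ ∑ _j ∈ F i, dist P Q := Finset.sum_le_sum fun j _ => by
            rw [← Real.dist_eq]; exact dist_le_pi_dist P Q j
        _ = (F i).card * dist P Q := by rw [Finset.sum_const, nsmul_eq_mul]
        _ = dist P Q * (F i).card := mul_comm _ _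
    calc dist (T P i) (T Q i)
        = |stdGaussianCDF (c i + α * ((∑ j ∈ F i, P j) / (F i).card))
            - stdGaussianCDF (c i + α * ((∑ j ∈ F i, Q j) / (F i).card))| := rfl
      _ ≤ M * |(c i + α * ((∑ j ∈ F i, P j) / (F i).card))
            - (c i + α * ((∑ j ∈ F i, Q j) / (F i).card))| := cdf_lipschitz _ _
      _ = M * (α * |(∑ j ∈ F i, P j) / (F i).card - (∑ j ∈ F i, Q j) / (F i).card|) := by
          rw [show (c i + α * ((∑ j ∈ F i, P j) / (F i).card))
            - (c i + α * ((∑ j ∈ F i, Q j) / (F i).card))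
            = α * ((∑ j ∈ F i, P j) / (F i).card - (∑ j ∈ F i, Q j) / (F i).card) by ring,
            abs_mul, abs_of_nonneg hα0]
      _ ≤ M * (α * dist P Q) := by
          exact mul_le_mul_of_nonneg_left (mul_le_mul_of_nonneg_left havg hα0) hM0
      _ = α * M * dist P Q := by ring
  have hc : ContractingWith K T := ⟨by exact_mod_cast hK1, hlip⟩
  refine ⟨hc.fixedPoint T, ⟨?_, ?_⟩, ?_⟩
  · intro i
    have := hc.fixedPoint_isFixedPt (f := T)
    rw [show hc.fixedPoint T i = T (hc.fixedPoint T) i from (congrFun this i).symm]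
    exact cdf_mem_Icc _
  · intro i
    exact (congrFun (hc.fixedPoint_isFixedPt (f := T)) i).symm
  · rintro Q ⟨-, hQ⟩
    exact hc.fixedPoint_unique (funext fun i => (hQ i).symm)
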